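/- Let N be a complete normal subgroup of an n-space group Γ, let V = Span(N), let K be the kernel of the action of Γ on V, let v0 ∈ V, and let Σ = {γ ∈ Γ : γ(V^⊥ + v0) = V^⊥ + v0} be the setwise stabilizer in Γ of the affine subspace V^⊥ + v0. Then: (1) N ∩ Σ = {ν ∈ N : ν(v0) = v0}; (2) K ⊆ Σ; (3) an element b+B of Γ, with b = c+d where c ∈ V and d ∈ V^⊥, lies in NΣ if and only if there exists ν ∈ N with ν(v0) = c + Bv0; (4) N ∩ Σ is finite, K has finite index in Σ, and NK has finite index in NΣ. -/

import Mathlib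

noncomputable section

abbrev Euc (n : ℕ) : Type := EuclideanSpace ℝ (Fin n)

abbrev AffG (n : ℕ) : Type := Euc n ≃ᵃ[ℝ] Euc n

/-- The translation `x ↦ a + x` as an affinity of `Eⁿ`. -/
def transl {n : ℕ} (a : Euc n) : AffG n := AffineEquiv.constVAdd ℝ (Euc n) a

/-- `Span(H)` : the linear span of the translation vectors of `H`. -/
def spanOf {n : ℕ} (H : Subgroup (AffG n)) : Submodule ℝ (Euc n) :=
  Submodule.span ℝ {a : Euc n | transl a ∈ H}

/-- An `n`-space group: a group of isometries acting properly discontinuously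
and cocompactly on `Eⁿ`. -/
def IsSpaceGroup {n : ℕ} (Γ : Subgroup (AffG n)) : Prop :=
  (∀ f ∈ Γ, Isometry (⇑f)) ∧
  (∀ K : Set (Euc n), IsCompact K →
    {γ : AffG n | γ ∈ Γ ∧ ((⇑γ '' K) ∩ K).Nonempty}.Finite) ∧
  (∃ K : Set (Euc n), IsCompact K ∧ ∀ x : Euc n, ∃ γ ∈ Γ, γ x ∈ K)

/-- `N` is a complete normal subgroup of `Γ`:  it is normal in `Γ` and
equals `{a+A ∈ Γ : a ∈ V ∧ V^⊥ ⊆ Fix A}` where `V = Span N`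
(for `f = a + A` we have `a = f 0` and `A = f.linear`). -/
def IsCompleteNormal {n : ℕ} (N Γ : Subgroup (AffG n)) : Prop :=
  N ≤ Γ ∧ (∀ γ ∈ Γ, ∀ ν ∈ N, γ * ν * γ⁻¹ ∈ N) ∧
  (∀ f : AffG n, f ∈ N ↔
    f ∈ Γ ∧ f 0 ∈ spanOf N ∧ ∀ x ∈ (spanOf N)ᗮ, f.linear x = x)

/-- Membership in the kernel `K = {b+B ∈ Γ : b ∈ V^⊥ ∧ V ⊆ Fix B}`
of the action of `Γ` on `V`. -/
def InKernel {n : ℕ} (Γ : Subgroup (AffG n)) (V : Submodule ℝ (Euc n)) (f : AffG n) : Prop :=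
  f ∈ Γ ∧ f 0 ∈ Vᗮ ∧ ∀ x ∈ V, f.linear x = x

end


namespace Stmt2Aux
variable {n : ℕ}

lemma apply_eq (f : AffG n) (x : Euc n) : f x = f.linear x + f 0 := by
  simpa using f.map_vadd (0 : Euc n) x

lemma apply_add (f : AffG n) (x w : Euc n) : f (x + w) = f x + f.linear w := by
  rw [apply_eq f (x + w), map_add, apply_eq f x]; abel

lemma transl_injective : Function.Injective (transl (n := n)) := by
  intro a b h
  have h2 := congrArg (fun f : AffG n => f 0) h
  simpa [transl] using h2

lemma conj_transl (γ : AffG n) (a : Euc n) : γ * transl a * γ⁻¹ = transl (γ.linear a) := by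
  refine AffineEquiv.ext fun x => ?_
  show γ (a + γ⁻¹ x) = γ.linear a + x
  rw [add_comm a, apply_add, show γ (γ⁻¹ x) = x from γ.apply_symm_apply x, add_comm]

lemma linear_norm {f : AffG n} (h : Isometry (⇑f)) (x : Euc n) : ‖f.linear x‖ = ‖x‖ := by
  have h1 : f.linear x = f x - f 0 := by rw [apply_eq f x]; abel
  rw [h1, ← dist_eq_norm, h.dist_eq, dist_eq_norm, sub_zero]

lemma linear_inner {f : AffG n} (h : Isometry (⇑f)) (x y : Euc n) :
    inner ℝ (f.linear x) (f.linear y) = (inner ℝ x y : ℝ) :=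
  (⟨f.linear.toLinearMap, linear_norm h⟩ : Euc n →ₗᵢ[ℝ] Euc n).inner_map_map x y

lemma decomp_unique {V : Submodule ℝ (Euc n)} {c d c' d' : Euc n} (hc : c ∈ V) (hd : d ∈ Vᗮ)
    (hc' : c' ∈ V) (hd' : d' ∈ Vᗮ) (h : c + d = c' + d') : c = c' ∧ d = d' := by
  have h1 : c - c' = d' - d := by rw [sub_eq_sub_iff_add_eq_add, h]; exact add_comm _ _
  have h2 : c - c' ∈ V := sub_mem hc hc'
  have h3 : c - c' ∈ Vᗮ := h1 ▸ sub_mem hd' hd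
  have h4 : c - c' = 0 := Submodule.disjoint_def.mp (Submodule.orthogonal_disjoint V) _ h2 h3
  have h5 : c = c' := by rwa [sub_eq_zero] at h4
  exact ⟨h5, by rw [h5] at h; exact add_left_cancel h⟩

variable {Γ N : Subgroup (AffG n)}

lemma linear_mem_V (hN : IsCompleteNormal N Γ) {γ : AffG n} (hγ : γ ∈ Γ)
    {x : Euc n} (hx : x ∈ spanOf N) : γ.linear x ∈ spanOf N := by
  have hx' : x ∈ Submodule.span ℝ {a : Euc n | transl a ∈ N} := hx
  clear hx
  induction hx' using Submodule.span_induction with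
  | mem a ha =>
      refine Submodule.subset_span ?_
      have h1 : γ * transl a * γ⁻¹ ∈ N := hN.2.1 γ hγ _ ha
      rwa [conj_transl] at h1
  | zero => simp only [map_zero]; exact (spanOf N).zero_mem
  | add x y _ _ hx1 hy1 => rw [map_add]; exact add_mem hx1 hy1
  | smul c x _ hx1 => rw [map_smul]; exact Submodule.smul_mem _ c hx1

lemma linear_mem_perp (hΓ : IsSpaceGroup Γ) (hN : IsCompleteNormal N Γ) {γ : AffG n} (hγ : γ ∈ Γ)
    {x : Euc n} (hx : x ∈ (spanOf N)ᗮ) : γ.linear x ∈ (spanOf N)ᗮ := by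
  rw [Submodule.mem_orthogonal] at hx ⊢
  intro u hu
  have hw : (γ⁻¹).linear u ∈ spanOf N := linear_mem_V hN (inv_mem hγ) hu
  calc (inner ℝ u (γ.linear x) : ℝ)
      = inner ℝ (γ.linear ((γ⁻¹).linear u)) (γ.linear x) := by
        rw [show γ.linear ((γ⁻¹).linear u) = u from γ.linear.apply_symm_apply u]
    _ = inner ℝ ((γ⁻¹).linear u) x := linear_inner (hΓ.1 γ hγ) _ _
    _ = 0 := hx _ hw

end Stmt2Aux

open Stmt2Aux

set_option maxHeartbeats 1000000

/-- Lemma 2: properties of the stabilizer `Σ` in `Γ` of the affine subspace `V^⊥ + v₀`. -/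
theorem stmt2 {n : ℕ} (Γ N K Sg : Subgroup (AffG n))
    (hΓ : IsSpaceGroup Γ) (hN : IsCompleteNormal N Γ)
    (hK : ∀ f : AffG n, f ∈ K ↔ InKernel Γ (spanOf N) f)
    (v0 : Euc n) (hv0 : v0 ∈ spanOf N)
    (hSg : ∀ f : AffG n, f ∈ Sg ↔ f ∈ Γ ∧
      ⇑f '' {x : Euc n | ∃ w ∈ (spanOf N)ᗮ, x = w + v0} =
        {x : Euc n | ∃ w ∈ (spanOf N)ᗮ, x = w + v0}) :
    (∀ f : AffG n, f ∈ N ⊓ Sg ↔ f ∈ N ∧ f v0 = v0) ∧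
    K ≤ Sg ∧
    (∀ f ∈ Γ, ∀ c d : Euc n, c ∈ spanOf N → d ∈ (spanOf N)ᗮ → f 0 = c + d →
      (f ∈ N ⊔ Sg ↔ ∃ ν ∈ N, ν v0 = c + f.linear v0)) ∧
    ((N ⊓ Sg : Subgroup (AffG n)) : Set (AffG n)).Finite ∧
    (K.subgroupOf Sg).FiniteIndex ∧
    ((N ⊔ K).subgroupOf (N ⊔ Sg)).FiniteIndex := by
  classical
  have hSgΓ : ∀ f ∈ Sg, f ∈ Γ := fun f hf => ((hSg f).1 hf).1
  -- the criterion for membership in Sg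
  have crit : ∀ f : AffG n, f ∈ Γ → (f ∈ Sg ↔ f v0 - v0 ∈ (spanOf N)ᗮ) := by
    intro f hf
    constructor
    · intro hfS
      have him := ((hSg f).1 hfS).2
      have hv0S : v0 ∈ {x : Euc n | ∃ w ∈ (spanOf N)ᗮ, x = w + v0} :=
        ⟨0, zero_mem _, (zero_add v0).symm⟩
      have h1 : f v0 ∈ {x : Euc n | ∃ w ∈ (spanOf N)ᗮ, x = w + v0} :=
        him ▸ Set.mem_image_of_mem _ hv0S
      obtain ⟨w, hw, hfw⟩ := h1
      have : f v0 - v0 = w := by rw [hfw]; abel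
      rwa [this]
    · intro hperp
      refine (hSg f).2 ⟨hf, ?_⟩
      apply Set.Subset.antisymm
      · rintro x ⟨y, ⟨w, hw, rfl⟩, rfl⟩
        refine ⟨f (w + v0) - v0, ?_, by abel⟩
        have h1 : f (w + v0) - v0 = f.linear w + (f v0 - v0) := by
          rw [add_comm w v0, apply_add]; abel
        rw [h1]
        exact add_mem (linear_mem_perp hΓ hN hf hw) hperp
      · intro y hy
        obtain ⟨w, hw, rfl⟩ := hy
        refine ⟨f⁻¹ (w + v0), ?_, f.apply_symm_apply _⟩
        have hinv : f⁻¹ v0 - v0 ∈ (spanOf N)ᗮ := by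
          have h2 : f⁻¹ v0 - v0 = (f⁻¹).linear (v0 - f v0) := by
            have h3 : f⁻¹ v0 - f⁻¹ (f v0) = (f⁻¹).linear (v0 - f v0) := by
              rw [apply_eq f⁻¹ v0, apply_eq f⁻¹ (f v0), map_sub]; abel
            rw [show f⁻¹ (f v0) = v0 from f.symm_apply_apply v0] at h3
            exact h3
          rw [h2]
          exact linear_mem_perp hΓ hN (inv_mem hf) (by simpa using neg_mem hperp)
        have h4 : f⁻¹ (w + v0) - v0 = (f⁻¹).linear w + (f⁻¹ v0 - v0) := by
          rw [show (w + v0 : Euc n) = v0 + w by abel, apply_add]; abel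
        refine ⟨f⁻¹ (w + v0) - v0, ?_, by abel⟩
        rw [h4]
        exact add_mem (linear_mem_perp hΓ hN (inv_mem hf) hw) hinv
  -- Part 1
  have part1 : ∀ f : AffG n, f ∈ N ⊓ Sg ↔ f ∈ N ∧ f v0 = v0 := by
    intro f
    rw [Subgroup.mem_inf]
    constructor
    · rintro ⟨hfN, hfS⟩
      have hfΓ := hN.1 hfN
      have h1 : f v0 - v0 ∈ (spanOf N)ᗮ := (crit f hfΓ).1 hfS
      have h2 : f v0 - v0 ∈ spanOf N := by
        rw [apply_eq f v0]
        exact sub_mem (add_mem (linear_mem_V hN hfΓ hv0) ((hN.2.2 f).1 hfN).2.1) hv0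
      have h3 : f v0 - v0 = 0 :=
        Submodule.disjoint_def.mp (Submodule.orthogonal_disjoint _) _ h2 h1
      exact ⟨hfN, by rwa [sub_eq_zero] at h3⟩
    · rintro ⟨hfN, hfv⟩
      exact ⟨hfN, (crit f (hN.1 hfN)).2 (by rw [hfv, sub_self]; exact zero_mem _)⟩
  -- Part 2
  have part2 : K ≤ Sg := by
    intro k hk
    obtain ⟨hkΓ, hk0, hkfix⟩ := (hK k).1 hk
    refine (crit k hkΓ).2 ?_
    have h1 : k v0 - v0 = k 0 := by rw [apply_eq k v0, hkfix v0 hv0]; abel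
    rwa [h1]
  -- decomposition of N ⊔ Sg
  have memsup : ∀ f : AffG n, f ∈ N ⊔ Sg ↔ ∃ ν ∈ N, ∃ σ ∈ Sg, f = ν * σ := by
    intro f
    constructor
    · intro hf
      let P : Subgroup (AffG n) :=
        { carrier := {g | ∃ ν ∈ N, ∃ σ ∈ Sg, g = ν * σ}
          one_mem' := ⟨1, one_mem N, 1, one_mem Sg, (one_mul 1).symm⟩
          mul_mem' := by
            rintro a b ⟨ν₁, hν₁, σ₁, hσ₁, rfl⟩ ⟨ν₂, hν₂, σ₂, hσ₂, rfl⟩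
            exact ⟨ν₁ * (σ₁ * ν₂ * σ₁⁻¹), mul_mem hν₁ (hN.2.1 σ₁ (hSgΓ σ₁ hσ₁) ν₂ hν₂),
              σ₁ * σ₂, mul_mem hσ₁ hσ₂, by group⟩
          inv_mem' := by
            rintro a ⟨ν, hν, σ, hσ, rfl⟩
            have h1 := hN.2.1 σ⁻¹ (inv_mem (hSgΓ σ hσ)) ν⁻¹ (inv_mem hν)
            rw [inv_inv] at h1
            exact ⟨σ⁻¹ * ν⁻¹ * σ, h1, σ⁻¹, inv_mem hσ, by group⟩ }
      have hle : N ⊔ Sg ≤ P := sup_le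
        (fun ν hν => ⟨ν, hν, 1, one_mem Sg, (mul_one ν).symm⟩)
        (fun σ hσ => ⟨1, one_mem N, σ, hσ, (one_mul σ).symm⟩)
      exact hle hf
    · rintro ⟨ν, hν, σ, hσ, rfl⟩
      exact mul_mem ((le_sup_left : N ≤ N ⊔ Sg) hν) ((le_sup_right : Sg ≤ N ⊔ Sg) hσ)
  -- Part 3
  have part3 : ∀ f ∈ Γ, ∀ c d : Euc n, c ∈ spanOf N → d ∈ (spanOf N)ᗮ → f 0 = c + d →
      (f ∈ N ⊔ Sg ↔ ∃ ν ∈ N, ν v0 = c + f.linear v0) := by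
    intro f hf c d hc hd hf0
    constructor
    · intro hfsup
      obtain ⟨ν, hν, σ, hσ, rfl⟩ := (memsup _).1 hfsup
      have hσΓ := hSgΓ σ hσ
      have hνΓ := hN.1 hν
      have hw : σ v0 - v0 ∈ (spanOf N)ᗮ := (crit σ hσΓ).1 hσ
      have hfix := ((hN.2.2 ν).1 hν).2.2
      have e1 : (ν * σ) v0 = ν v0 + (σ v0 - v0) := by
        calc (ν * σ) v0 = ν (σ v0) := rfl
          _ = ν (v0 + (σ v0 - v0)) := by rw [show v0 + (σ v0 - v0) = σ v0 by abel]
          _ = ν v0 + ν.linear (σ v0 - v0) := apply_add ν _ _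
          _ = ν v0 + (σ v0 - v0) := by rw [hfix _ hw]
      have e2 : (ν * σ) v0 = (c + (ν * σ).linear v0) + d := by
        rw [apply_eq (ν * σ) v0, hf0]; abel
      have hm1 : ν v0 ∈ spanOf N := by
        rw [apply_eq ν v0]
        exact add_mem (linear_mem_V hN hνΓ hv0) ((hN.2.2 ν).1 hν).2.1
      have hm2 : c + (ν * σ).linear v0 ∈ spanOf N :=
        add_mem hc (linear_mem_V hN (mul_mem hνΓ hσΓ) hv0)
      have h5 := decomp_unique hm1 hw hm2 hd (by rw [← e1, e2])
      exact ⟨ν, hν, h5.1⟩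
    · rintro ⟨ν, hν, hνv⟩
      have hνΓ := hN.1 hν
      refine (memsup f).2 ⟨ν, hν, ν⁻¹ * f, ?_, by group⟩
      have hσΓ : ν⁻¹ * f ∈ Γ := mul_mem (inv_mem hνΓ) hf
      refine (crit _ hσΓ).2 ?_
      have hfv : f v0 = ν v0 + d := by
        rw [apply_eq f v0, hf0, hνv]; abel
      have hfixinv : (ν⁻¹).linear d = d := ((hN.2.2 ν⁻¹).1 (inv_mem hν)).2.2 d hd
      have h6 : (ν⁻¹ * f) v0 = v0 + d := by
        calc (ν⁻¹ * f) v0 = ν⁻¹ (f v0) := rfl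
          _ = ν⁻¹ (ν v0 + d) := by rw [hfv]
          _ = ν⁻¹ (ν v0) + (ν⁻¹).linear d := apply_add _ _ _
          _ = v0 + d := by
              rw [show ν⁻¹ (ν v0) = v0 from ν.symm_apply_apply v0, hfixinv]
      rw [show (ν⁻¹ * f) v0 - v0 = d by rw [h6]; abel]
      exact hd
  -- Part 4a
  have part4a : ((N ⊓ Sg : Subgroup (AffG n)) : Set (AffG n)).Finite := by
    refine (hΓ.2.1 {v0} isCompact_singleton).subset ?_
    intro f hf
    have h1 := (part1 f).1 hf
    exact ⟨hN.1 h1.1, ⟨v0, ⟨v0, rfl, h1.2⟩, rfl⟩⟩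
  -- finite spanning set of V
  obtain ⟨b, hbT, hbspan, hbli⟩ :=
    exists_linearIndependent ℝ {a : Euc n | transl a ∈ N}
  have hbfin : b.Finite := hbli.setFinite
  -- bounded translations are finitely many
  have hTball : ∀ R : ℝ, 0 ≤ R → {a : Euc n | transl a ∈ N ∧ ‖a‖ ≤ R}.Finite := by
    intro R hR
    have hfin := hΓ.2.1 (Metric.closedBall 0 R) (isCompact_closedBall 0 R)
    have himg : transl '' {a : Euc n | transl a ∈ N ∧ ‖a‖ ≤ R} ⊆
        {γ : AffG n | γ ∈ Γ ∧ ((⇑γ '' Metric.closedBall 0 R) ∩ Metric.closedBall 0 R).Nonempty} := by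
      rintro g ⟨a, ⟨haT, haR⟩, rfl⟩
      refine ⟨hN.1 haT, ⟨a, ⟨0, ?_, ?_⟩, ?_⟩⟩
      · exact Metric.mem_closedBall.2 (by simpa using hR)
      · show a + 0 = a; rw [add_zero]
      · exact Metric.mem_closedBall.2 (by simpa using haR)
    exact Set.Finite.of_finite_image (hfin.subset himg) transl_injective.injOn
  -- a bound for the generators
  obtain ⟨R0, hR0⟩ := (hbfin.image fun a => ‖a‖).bddAbove
  set R : ℝ := max R0 0 with hRdef
  have hRb : ∀ a ∈ b, ‖a‖ ≤ R := fun a ha =>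
    le_trans (hR0 ⟨a, ha, rfl⟩) (le_max_left _ _)
  have hF : {a : Euc n | transl a ∈ N ∧ ‖a‖ ≤ R}.Finite := hTball R (le_max_right _ _)
  -- the key criterion for K-cosets in Sg
  have key : ∀ σ τ : AffG n, σ ∈ Sg → τ ∈ Sg →
      ((σ⁻¹ * τ ∈ K) ↔ ∀ a ∈ b, σ.linear a = τ.linear a) := by
    intro σ τ hσ hτ
    constructor
    · intro h a ha
      have haV : a ∈ spanOf N := Submodule.subset_span (hbT ha)
      have h2 : (σ⁻¹).linear (τ.linear a) = a := ((hK _).1 h).2.2 a haV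
      have h3 := congrArg σ.linear h2
      exact ((σ.linear.apply_symm_apply (τ.linear a)).symm.trans h3).symm
    · intro h
      have hστ : σ⁻¹ * τ ∈ Sg := mul_mem (inv_mem hσ) hτ
      have hgΓ : σ⁻¹ * τ ∈ Γ := hSgΓ _ hστ
      have hfix : ∀ x ∈ spanOf N, (σ⁻¹ * τ).linear x = x := by
        intro x hx
        have hx' : x ∈ Submodule.span ℝ b := by
          rw [hbspan]; exact hx
        clear hx
        induction hx' using Submodule.span_induction with
        | mem a ha =>
            show (σ⁻¹).linear (τ.linear a) = a
            rw [← h a ha]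
            exact σ.linear.symm_apply_apply a
        | zero => exact map_zero _
        | add x y _ _ hx1 hy1 =>
            show (σ⁻¹ * τ).linear (x + y) = x + y
            rw [map_add, hx1, hy1]
        | smul c x _ hx1 =>
            show (σ⁻¹ * τ).linear (c • x) = c • x
            rw [map_smul, hx1]
      have h0 : (σ⁻¹ * τ) 0 ∈ (spanOf N)ᗮ := by
        have hcrit := (crit _ hgΓ).1 hστ
        have h7 : (σ⁻¹ * τ) 0 = (σ⁻¹ * τ) v0 - v0 := by
          rw [apply_eq (σ⁻¹ * τ) v0, hfix v0 hv0]; abel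
        rw [h7]; exact hcrit
      exact (hK _).2 ⟨hgΓ, h0, hfix⟩
  -- Part 4b : finite quotient Sg / K
  haveI hFsub : Finite ↥{a : Euc n | transl a ∈ N ∧ ‖a‖ ≤ R} := hF.to_subtype
  haveI hbsub : Finite ↥b := hbfin.to_subtype
  have hmemF : ∀ (σ : ↥Sg) (a : ↥b),
      (σ : AffG n).linear ↑a ∈ {a : Euc n | transl a ∈ N ∧ ‖a‖ ≤ R} := by
    intro σ a
    have hσΓ : (σ : AffG n) ∈ Γ := hSgΓ _ σ.2
    constructor
    · have h1 : (σ : AffG n) * transl ↑a * (σ : AffG n)⁻¹ ∈ N :=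
        hN.2.1 _ hσΓ _ (hbT a.2)
      rwa [conj_transl] at h1
    · rw [linear_norm (hΓ.1 _ hσΓ)]
      exact hRb _ a.2
  have hcoset : ∀ σ τ : ↥Sg, σ⁻¹ * τ ∈ K.subgroupOf Sg ↔
      ∀ a : ↥b, (σ : AffG n).linear ↑a = (τ : AffG n).linear ↑a := by
    intro σ τ
    rw [Subgroup.mem_subgroupOf]
    have hcoe : ((σ⁻¹ * τ : ↥Sg) : AffG n) = (σ : AffG n)⁻¹ * (τ : AffG n) := rfl
    rw [hcoe, key _ _ σ.2 τ.2]
    exact ⟨fun h a => h ↑a a.2, fun h a ha => h ⟨a, ha⟩⟩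
  have hfinQ : Finite (Sg ⧸ K.subgroupOf Sg) := by
    let Φ : Sg ⧸ K.subgroupOf Sg → (↥b → ↥{a : Euc n | transl a ∈ N ∧ ‖a‖ ≤ R}) := fun q =>
      Quotient.liftOn' q (fun σ => fun a => ⟨(σ : AffG n).linear ↑a, hmemF σ a⟩)
        (by
          intro σ τ hst
          rw [QuotientGroup.leftRel_apply] at hst
          funext a
          exact Subtype.ext ((hcoset σ τ).1 hst a))
    have hinj : Function.Injective Φ := by
      intro q1 q2
      refine Quotient.inductionOn₂' q1 q2 (fun σ τ h => ?_)
      refine Quotient.sound' (QuotientGroup.leftRel_apply.mpr ?_)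
      refine (hcoset σ τ).2 (fun a => ?_)
      have h2 := congrFun h a
      exact congrArg Subtype.val h2
    exact Finite.of_injective Φ hinj
  have part4b : (K.subgroupOf Sg).FiniteIndex :=
    @Subgroup.finiteIndex_of_finite_quotient _ _ _ hfinQ
  -- Part 4c
  have hle1 : Sg ≤ N ⊔ Sg := le_sup_right
  have hfinQ2 : Finite (↥(N ⊔ Sg) ⧸ (N ⊔ K).subgroupOf (N ⊔ Sg)) := by
    let ψ : Sg ⧸ K.subgroupOf Sg → (↥(N ⊔ Sg) ⧸ (N ⊔ K).subgroupOf (N ⊔ Sg)) := fun q =>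
      Quotient.liftOn' q (fun σ => QuotientGroup.mk ⟨↑σ, hle1 σ.2⟩)
        (by
          intro σ τ hst
          rw [QuotientGroup.leftRel_apply] at hst
          rw [Subgroup.mem_subgroupOf] at hst
          refine QuotientGroup.eq.mpr ?_
          rw [Subgroup.mem_subgroupOf]
          exact (le_sup_right : K ≤ N ⊔ K) hst)
    have hsurj : Function.Surjective ψ := by
      intro q
      refine Quotient.inductionOn' q (fun f => ?_)
      obtain ⟨ν, hν, σ, hσ, hfeq⟩ := (memsup ↑f).1 f.2
      refine ⟨Quotient.mk'' ⟨σ, hσ⟩, ?_⟩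
      show QuotientGroup.mk ⟨σ, hle1 hσ⟩ = Quotient.mk'' f
      refine QuotientGroup.eq.mpr ?_
      rw [Subgroup.mem_subgroupOf]
      have h1 := hN.2.1 σ⁻¹ (inv_mem (hSgΓ σ hσ)) ν hν
      rw [inv_inv] at h1
      have h2 : (((⟨σ, hle1 hσ⟩ : ↥(N ⊔ Sg))⁻¹ * f : ↥(N ⊔ Sg)) : AffG n) = σ⁻¹ * ν * σ := by
        show σ⁻¹ * (f : AffG n) = σ⁻¹ * ν * σ
        rw [hfeq]; group
      rw [h2]
      exact (le_sup_left : N ≤ N ⊔ K) h1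
    exact Finite.of_surjective ψ hsurj
  have part4c : ((N ⊔ K).subgroupOf (N ⊔ Sg)).FiniteIndex :=
    @Subgroup.finiteIndex_of_finite_quotient _ _ _ hfinQ2
  exact ⟨part1, part2, part3, part4a, part4b, part4c⟩
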